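/- With Z^{(1)}_{L,M,N}(n) := ((M−L−1+n)!·(L−n)!)/((n−1)!·(L−n−N+1)!·(M−L+N−1)!) · Z_{L,M−1,N−1}, and Z_{L,M,N} := ∏_{j=1}^{N} ((j−1)!(M−N+j)!)/((L−N+j−1)!(M−L+j)!), one has the summation identity ∑_{n=1}^{L−N+1} Z^{(1)}_{L,M,N}(n) = Z_{L,M,N}, for integers M ≥ L > N ≥ 1. -/

import Mathlib

open Finset Nat

private lemma hockey (a b : ℕ) :
    ∑ k ∈ range (a+1), (b+k).choose k = (a+b+1).choose a := by
  induction a with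
  | zero => simp
  | succ a ih =>
      rw [Finset.sum_range_succ, ih, show b+(a+1) = a+b+1 by ring,
        show a+1+b+1 = (a+b+1)+1 by ring]
      exact (Nat.choose_succ_succ (a+b+1) a).symm

private lemma key1 (s : ℕ) : ∀ a b : ℕ,
    ∑ k ∈ range (a+1), (b+k).choose k * (s+a-k).choose (a-k)
      = (a+b+s+1).choose a := by
  induction s with
  | zero =>
    intro a b
    have h : ∀ k ∈ range (a+1), (b+k).choose k * (0+a-k).choose (a-k)
        = (b+k).choose k := by
      intro k hk
      rw [Nat.zero_add, Nat.choose_self, Nat.mul_one]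
    rw [Finset.sum_congr rfl h, hockey]
  | succ s ih =>
    intro a b
    induction a with
    | zero => simp
    | succ a iha =>
      have h : ∀ k ∈ range (a+1),
          (b+k).choose k * (s+1+(a+1)-k).choose (a+1-k)
          = (b+k).choose k * (s+1+a-k).choose (a-k)
            + (b+k).choose k * (s+1+a-k).choose (a+1-k) := by
        intro k hk
        rw [Finset.mem_range] at hk
        rw [show s+1+(a+1)-k = (s+1+a-k)+1 by omega, show a+1-k = (a-k)+1 by omega,
          Nat.choose_succ_succ, Nat.mul_add, Nat.succ_eq_add_one,
          show (a-k)+1 = a+1-k by omega]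
      have h5 : ∑ k ∈ range (a+1+1), (b+k).choose k * (s+1+a-k).choose (a+1-k)
          = (a+1+b+s+1).choose (a+1) := by
        rw [← ih (a+1) b]
        refine Finset.sum_congr rfl fun k hk => ?_
        rw [show s+1+a-k = s+(a+1)-k by omega]
      rw [Finset.sum_range_succ] at h5
      simp only [Nat.sub_self, Nat.choose_zero_right, Nat.mul_one] at h5
      rw [Finset.sum_range_succ, Finset.sum_congr rfl h, Finset.sum_add_distrib, iha,
        add_assoc]
      simp only [Nat.sub_self, Nat.choose_zero_right, Nat.mul_one]
      rw [h5, show a+1+b+(s+1)+1 = (a+1+b+s+1)+1 by ring,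
        show a+b+(s+1)+1 = a+1+b+s+1 by ring]
      exact (Nat.choose_succ_succ (a+1+b+s+1) a).symm

private lemma fact_ne (n : ℕ) : ((n ! : ℕ) : ℚ) ≠ 0 :=
  Nat.cast_ne_zero.2 (Nat.factorial_ne_zero n)

private lemma key2 (S A B : ℕ) :
    ∑ k ∈ range (A+1), ((B+k)! * (S+A-k)! : ℚ) / (k ! * (A-k)!)
      = (B ! * S ! * (A+B+S+1)! : ℚ) / (A ! * (B+S+1)!) := by
  have h : ∀ k ∈ range (A+1), ((B+k)! * (S+A-k)! : ℚ) / (k ! * (A-k)!)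
      = (B ! * S ! : ℚ) * (((B+k).choose k * (S+A-k).choose (A-k) : ℕ) : ℚ) := by
    intro k hk
    rw [Finset.mem_range] at hk
    have h1 : (((B+k).choose k : ℕ) : ℚ) = (B+k)! / (k ! * B !) := by
      rw [Nat.cast_choose ℚ (by omega : k ≤ B+k), show B+k-k = B by omega]
    have h2 : (((S+A-k).choose (A-k) : ℕ) : ℚ) = (S+A-k)! / ((A-k)! * S !) := by
      rw [Nat.cast_choose ℚ (by omega : A-k ≤ S+A-k), show S+A-k-(A-k) = S by omega]
    push_cast [h1, h2]
    field_simp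
  rw [Finset.sum_congr rfl h, ← Finset.mul_sum, ← Nat.cast_sum, key1 S A B,
    Nat.cast_choose ℚ (by omega : A ≤ A+B+S+1), show A+B+S+1-A = B+S+1 by omega]
  field_simp

private lemma key3 (A B : ℕ) : ∀ S : ℕ,
    ∏ i ∈ range (S+1), ((i)! * (A+B+1+i)! : ℚ) / ((A+i)! * (B+1+i)!)
      = (B ! * S ! * (A+B+S+1)! : ℚ) / (A ! * (B+S)! * (B+S+1)!) *
        ∏ i ∈ range S, ((i)! * (A+B+1+i)! : ℚ) / ((A+1+i)! * (B+i)!) := by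
  intro S
  induction S with
  | zero =>
    simp only [Finset.prod_range_succ, Finset.prod_range_zero, Finset.range_zero,
      Nat.add_zero, Nat.factorial_zero, one_mul, mul_one]
    rw [show A+B+0+1 = A+B+1 by ring, show B+0+1 = B+1 by ring]
    field_simp
    ring
  | succ S ih =>
    rw [Finset.prod_range_succ, ih, Finset.prod_range_succ]
    simp only [show A+B+1+(S+1) = A+B+(S+1)+1 from by ring, show A+(S+1) = A+1+S from by ring,
      show B+1+(S+1) = B+S+1+1 from by ring, show A+B+S+1 = A+B+1+S from by ring,
      show B+(S+1)+1 = B+S+1+1 from by ring, show B+(S+1) = B+S+1 from by ring]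
    ring



/-- The partition function `Z_{L,M,N}` of the four-vertex model,
`Z_{L,M,N} = ∏_{j=1}^{N} (j-1)! (M-N+j)! / ((L-N+j-1)! (M-L+j)!)`. -/
noncomputable def Z4v (L M N : ℕ) : ℚ :=
  ∏ j ∈ Finset.Icc 1 N,
    ((Nat.factorial (j - 1) : ℚ) * (Nat.factorial (M - N + j) : ℚ)) /
      ((Nat.factorial (L - N + j - 1) : ℚ) * (Nat.factorial (M - L + j) : ℚ))

/-- The boundary-refined partition function
`Z⁽¹⁾_{L,M,N}(n) = (M-L-1+n)! (L-n)! / ((n-1)! (L-n-N+1)! (M-L+N-1)!) ⬝ Z_{L,M-1,N-1}`,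
where `Z_{L,M-1,N-1} = ∏_{j=1}^{N-1} (j-1)! (M-N+j)! / ((L-N+j)! (M-L+j-1)!)`. -/
noncomputable def Z4vRefined (L M N n : ℕ) : ℚ :=
  ((Nat.factorial (M + n - L - 1) : ℚ) * (Nat.factorial (L - n) : ℚ)) /
      ((Nat.factorial (n - 1) : ℚ) * (Nat.factorial (L + 1 - n - N) : ℚ) *
        (Nat.factorial (M - L + N - 1) : ℚ)) *
    ∏ j ∈ Finset.Icc 1 (N - 1),
      ((Nat.factorial (j - 1) : ℚ) * (Nat.factorial (M - N + j) : ℚ)) /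
        ((Nat.factorial (L - N + j) : ℚ) * (Nat.factorial (M - L + j - 1) : ℚ))

/-- Summing the boundary-refined partition function over the refinement position
recovers the full partition function: `∑_{n=1}^{L-N+1} Z⁽¹⁾_{L,M,N}(n) = Z_{L,M,N}`. -/
theorem sum_refined_eq_Z (L M N : ℕ) (hN : 1 ≤ N) (hNL : N < L) (hLM : L ≤ M) :
    ∑ n ∈ Finset.Icc 1 (L - N + 1), Z4vRefined L M N n = Z4v L M N := by
  obtain ⟨S, rfl⟩ := Nat.exists_eq_add_of_le hN
  obtain ⟨A', rfl⟩ := Nat.exists_eq_add_of_lt hNL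
  obtain ⟨B, rfl⟩ := Nat.exists_eq_add_of_le hLM
  simp only [Z4vRefined, Z4v]
  have hP : (∏ j ∈ Finset.Icc 1 (1+S-1),
      ((Nat.factorial (j-1) : ℚ) * (Nat.factorial (1+S+A'+1+B - (1+S) + j) : ℚ)) /
        ((Nat.factorial (1+S+A'+1 - (1+S) + j) : ℚ) * (Nat.factorial (1+S+A'+1+B - (1+S+A'+1) + j - 1) : ℚ)))
      = ∏ i ∈ range S,
          ((i)! * ((A'+1)+B+1+i)! : ℚ) / (((A'+1)+1+i)! * (B+i)!) := by
    rw [show 1+S-1 = S by omega, ← Finset.Ico_add_one_right_eq_Icc, Finset.prod_Ico_eq_prod_range,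
      show S+1-1 = S by omega]
    refine Finset.prod_congr rfl fun i hi => ?_
    rw [show 1+i-1 = i by omega, show 1+S+A'+1+B - (1+S) + (1+i) = (A'+1)+B+1+i by omega,
      show 1+S+A'+1 - (1+S) + (1+i) = (A'+1)+1+i by omega,
      show 1+S+A'+1+B - (1+S+A'+1) + (1+i) - 1 = B+i by omega]
  have hZ : (∏ j ∈ Finset.Icc 1 (1+S),
      ((Nat.factorial (j-1) : ℚ) * (Nat.factorial (1+S+A'+1+B - (1+S) + j) : ℚ)) /
        ((Nat.factorial (1+S+A'+1 - (1+S) + j - 1) : ℚ) * (Nat.factorial (1+S+A'+1+B - (1+S+A'+1) + j) : ℚ)))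
      = ∏ i ∈ range (S+1),
          ((i)! * ((A'+1)+B+1+i)! : ℚ) / (((A'+1)+i)! * (B+1+i)!) := by
    rw [← Finset.Ico_add_one_right_eq_Icc, Finset.prod_Ico_eq_prod_range,
      show 1+S+1-1 = S+1 by omega]
    refine Finset.prod_congr rfl fun i hi => ?_
    rw [show 1+i-1 = i by omega, show 1+S+A'+1+B - (1+S) + (1+i) = (A'+1)+B+1+i by omega,
      show 1+S+A'+1 - (1+S) + (1+i) - 1 = (A'+1)+i by omega,
      show 1+S+A'+1+B - (1+S+A'+1) + (1+i) = B+1+i by omega]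
  have hsum : ∑ n ∈ Finset.Icc 1 (1+S+A'+1 - (1+S) + 1),
      (((Nat.factorial (1+S+A'+1+B + n - (1+S+A'+1) - 1) : ℚ) * (Nat.factorial (1+S+A'+1 - n) : ℚ)) /
        ((Nat.factorial (n-1) : ℚ) * (Nat.factorial (1+S+A'+1+1 - n - (1+S)) : ℚ) *
          (Nat.factorial (1+S+A'+1+B - (1+S+A'+1) + (1+S) - 1) : ℚ)) *
        ∏ j ∈ Finset.Icc 1 (1+S-1),
          ((Nat.factorial (j-1) : ℚ) * (Nat.factorial (1+S+A'+1+B - (1+S) + j) : ℚ)) /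
            ((Nat.factorial (1+S+A'+1 - (1+S) + j) : ℚ) * (Nat.factorial (1+S+A'+1+B - (1+S+A'+1) + j - 1) : ℚ)))
      = ((1:ℚ)/((B+S)!) * ∏ i ∈ range S,
          ((i)! * ((A'+1)+B+1+i)! : ℚ) / (((A'+1)+1+i)! * (B+i)!)) *
        ∑ i ∈ range ((A'+1)+1), ((B+i)! * (S+(A'+1)-i)! : ℚ) / ((i)! * ((A'+1)-i)!) := by
    rw [Finset.mul_sum, show 1+S+A'+1 - (1+S) + 1 = (A'+1)+1 by omega,
      ← Finset.Ico_add_one_right_eq_Icc, Finset.sum_Ico_eq_sum_range, show (A'+1)+1+1-1 = (A'+1)+1 by omega]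
    refine Finset.sum_congr rfl fun i hi => ?_
    rw [Finset.mem_range] at hi
    rw [hP, show 1+S+A'+1+B + (1+i) - (1+S+A'+1) - 1 = B+i by omega,
      show 1+S+A'+1 - (1+i) = S+(A'+1)-i by omega,
      show 1+i-1 = i by omega,
      show 1+S+A'+1+1 - (1+i) - (1+S) = (A'+1)-i by omega,
      show 1+S+A'+1+B - (1+S+A'+1) + (1+S) - 1 = B+S by omega]
    ring
  rw [hsum, key2, hZ, key3]
  ring
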